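/- Let q be a prime power, n = q² − 1, and let C be the cyclic code of length n over F_q with defining set T = C₀ ∪ C₁ ∪ C_{q+1} = {0, 1, q, q+1}. Then the minimum Hamming distance of C is at least 4. -/
import Mathlib


/-- Let `q` be a prime power, `n = q² − 1`, and `C` the cyclic code of length `n` over
`F_q` with defining set `T = {0, 1, q, q+1}` (zeros at `β^i`, `i ∈ T`, for a primitive
`n`-th root of unity `β` in an extension `L`).  Then the minimum Hamming distance of `C`
is at least `4`: every nonzero codeword has Hamming weight at least `4`. -/
theorem cyclic_code_min_distance_ge_four (q n : ℕ)
    (hq : ∃ p k : ℕ, p.Prime ∧ 0 < k ∧ q = p ^ k)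
    (Fq L : Type) [Field Fq] [Fintype Fq] [DecidableEq Fq] [Field L] [Algebra Fq L]
    (hcq : Fintype.card Fq = q) (hn : n = q ^ 2 - 1)
    (β : L) (hβ : orderOf β = n)
    (c : Fin n → Fq)
    (hc : ∀ i ∈ ({0, 1, q, q + 1} : Finset ℕ),
      ∑ j : Fin n, algebraMap Fq L (c j) * β ^ (i * (j : ℕ)) = 0)
    (hne : c ≠ 0) : 4 ≤ hammingNorm c := by
  by_contra hlt
  push_neg at hlt
  -- basic numerology
  obtain ⟨p, k, hp, hk, rfl⟩ := hq
  have hq2 : 2 ≤ p ^ k := by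
    calc 2 ≤ p := hp.two_le
    _ = p ^ 1 := (pow_one p).symm
    _ ≤ p ^ k := Nat.pow_le_pow_right hp.pos hk
  set q := p ^ k with hqdef
  have hq2n : q ^ 2 = n + 1 := by
    have : 4 ≤ q ^ 2 := by nlinarith
    omega
  -- injectivity of powers of β below n
  have hpow : ∀ u v : Fin n, β ^ (u : ℕ) = β ^ (v : ℕ) → u = v := by
    intro u v h
    exact Fin.ext (pow_injOn_Iio_orderOf (by simpa [hβ] using u.isLt)
      (by simpa [hβ] using v.isLt) h)
  -- β^(m*q^2) = β^m
  have hfrob : ∀ m : ℕ, β ^ (m * q ^ 2) = β ^ m := by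
    intro m
    have hb1 : β ^ n = 1 := by rw [← hβ]; exact pow_orderOf_eq_one β
    have : m * q ^ 2 = n * m + m := by rw [hq2n]; ring
    rw [this, pow_add, pow_mul, hb1, one_pow, one_mul]
  -- q-th power injectivity on powers of β
  have hqinj : ∀ u v : Fin n, (β ^ (u : ℕ)) ^ q = (β ^ (v : ℕ)) ^ q → u = v := by
    intro u v h
    apply hpow
    have h2 : ((β ^ (u : ℕ)) ^ q) ^ q = ((β ^ (v : ℕ)) ^ q) ^ q := by rw [h]
    rw [← pow_mul, ← pow_mul, ← pow_mul, ← pow_mul] at h2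
    have e1 : (u : ℕ) * (q * q) = (u : ℕ) * q ^ 2 := by ring
    have e2 : (v : ℕ) * (q * q) = (v : ℕ) * q ^ 2 := by ring
    rw [e1, e2, hfrob, hfrob] at h2
    exact h2
  have hinj : Function.Injective (algebraMap Fq L) := (algebraMap Fq L).injective
  -- the support
  set S : Finset (Fin n) := {i | c i ≠ 0} with hSdef
  have hScard : S.card ≤ 3 := by
    have : hammingNorm c = S.card := rfl
    omega
  have hmemS : ∀ i : Fin n, i ∈ S ↔ c i ≠ 0 := by
    intro i; simp [hSdef]
  have hSne : S.Nonempty := by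
    obtain ⟨i, hi⟩ := Function.ne_iff.mp hne
    exact ⟨i, (hmemS i).mpr (by simpa using hi)⟩
  have hsum : ∀ i ∈ ({0, 1, q, q + 1} : Finset ℕ),
      ∑ j ∈ S, algebraMap Fq L (c j) * β ^ (i * (j : ℕ)) = 0 := by
    intro i hi
    rw [← hc i hi]
    refine Finset.sum_subset S.subset_univ fun x _ hx => ?_
    have hcx : c x = 0 := by by_contra hcx; exact hx ((hmemS x).mpr hcx)
    simp [hcx]
  have hcard1 : 1 ≤ S.card := Finset.card_pos.mpr hSne
  interval_cases h : S.card
  · -- card 1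
    obtain ⟨j, hS⟩ := Finset.card_eq_one.mp h
    have e0 := hsum 0 (by simp)
    rw [hS, Finset.sum_singleton] at e0
    simp only [zero_mul, pow_zero, mul_one] at e0
    have : c j ≠ 0 := (hmemS j).mp (hS ▸ Finset.mem_singleton_self j)
    exact this (hinj (by simpa using e0))
  · -- card 2
    obtain ⟨j, l, hjl, hS⟩ := Finset.card_eq_two.mp h
    have hcj : c j ≠ 0 := (hmemS j).mp (by rw [hS]; simp)
    set a := algebraMap Fq L (c j) with ha
    set b := algebraMap Fq L (c l) with hb
    have e0 := hsum 0 (by simp)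
    have e1 := hsum 1 (by simp)
    rw [hS, Finset.sum_pair hjl] at e0 e1
    simp only [zero_mul, pow_zero, mul_one, one_mul] at e0 e1
    have hxy : β ^ (j : ℕ) ≠ β ^ (l : ℕ) := fun hcon => hjl (hpow j l hcon)
    have : a * (β ^ (j : ℕ) - β ^ (l : ℕ)) = 0 := by
      linear_combination e1 - β ^ (l : ℕ) * e0
    rcases mul_eq_zero.mp this with h' | h'
    · exact hcj (hinj (by simpa [ha] using h'))
    · exact hxy (sub_eq_zero.mp h')
  · -- card 3
    obtain ⟨j, l, m, hjl, hjm, hlm, hS⟩ := Finset.card_eq_three.mp h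
    have hcm : c m ≠ 0 := (hmemS m).mp (by rw [hS]; simp)
    set a := algebraMap Fq L (c j) with ha
    set b := algebraMap Fq L (c l) with hb
    set d := algebraMap Fq L (c m) with hd
    set x := β ^ (j : ℕ) with hx
    set y := β ^ (l : ℕ) with hy
    set z := β ^ (m : ℕ) with hz
    have hsum3 : ∀ i ∈ ({0, 1, q, q + 1} : Finset ℕ),
        a * β ^ (i * (j : ℕ)) + b * β ^ (i * (l : ℕ)) + d * β ^ (i * (m : ℕ)) = 0 := by
      intro i hi
      have := hsum i hi
      rw [hS, Finset.sum_insert (by simp [hjl, hjm]),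
        Finset.sum_insert (by simp [hlm]), Finset.sum_singleton] at this
      linear_combination this
    have e0 := hsum3 0 (by simp)
    have e1 := hsum3 1 (by simp)
    have e2 := hsum3 q (by simp)
    have e3 := hsum3 (q + 1) (by simp)
    simp only [zero_mul, pow_zero, mul_one, one_mul] at e0 e1
    have hrw : ∀ u : ℕ, β ^ (q * u) = (β ^ u) ^ q := by
      intro u; rw [← pow_mul, mul_comm]
    have hrw2 : ∀ u : ℕ, β ^ ((q + 1) * u) = (β ^ u) ^ q * β ^ u := by
      intro u; rw [← pow_mul, ← pow_add]; ring_nf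
    rw [hrw, hrw, hrw] at e2
    rw [hrw2, hrw2, hrw2] at e3
    -- the elimination
    have hbd : b * (y - x) = d * (x - z) := by linear_combination e1 - x * e0
    have E1 : d * ((x - z) * (y ^ q - x ^ q) + (y - x) * (z ^ q - x ^ q)) = 0 := by
      linear_combination (y - x) * e2 - (y - x) * x ^ q * e0 - (y ^ q - x ^ q) * hbd
    have E2 : d * ((x - z) * (y * y ^ q - x * x ^ q)
        + (y - x) * (z * z ^ q - x * x ^ q)) = 0 := by
      linear_combination (y - x) * e3 - (y - x) * (x * x ^ q) * e0
        - (y * y ^ q - x * x ^ q) * hbd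
    have key : d * ((y - x) * (x - z) * (y ^ q - z ^ q)) = 0 := by
      linear_combination E2 - x * E1
    have hd0 : d ≠ 0 := fun h' => hcm (hinj (by simpa [hd] using h'))
    have hyx : y - x ≠ 0 := sub_ne_zero.mpr (fun h' => hjl (hpow l j h').symm)
    have hxz : x - z ≠ 0 := sub_ne_zero.mpr (fun h' => hjm (hpow j m h'))
    have hyz : y ^ q - z ^ q = 0 := by
      rcases mul_eq_zero.mp key with h' | h'
      · exact absurd h' hd0
      · rcases mul_eq_zero.mp h' with h'' | h''
        · rcases mul_eq_zero.mp h'' with h3 | h3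
          · exact absurd h3 hyx
          · exact absurd h3 hxz
        · exact h''
    exact hlm (hqinj l m (sub_eq_zero.mp hyz))
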